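/- Let q = 2^h and let α, β, λ, α', β', λ' ∈ GF(q) with λ ≠ 0, λ' ≠ 0, λ ≠ λ', Tr(αβ) = 1, Tr(α'β') = 1, and Tr((α⊕α')(β⊕β')) = 1. Then the three conics F_{α,β,λ}, F_{α',β',λ'} and F_{α⊕α', β⊕β', λ+λ'} are pairwise disjoint subsets of PG(2,q). -/

import Mathlib

open scoped Classical

noncomputable section

namespace MaxArc

variable (F : Type) [Field F] [Fintype F]

/-- The absolute trace map of `GF(2^h)` over `GF(2)`, valued in the field itself
(the prime subfield is identified with `{0,1}`). -/
def tr (h : ℕ) (x : F) : F := ∑ i ∈ Finset.range h, x ^ 2 ^ i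

/-- The points of `PG(2,q)`. -/
abbrev Pt := Projectivization F (Fin 3 → F)

/-- The conic `F_{α,β,λ} = {(x,y,z) : α x² + x y + β y² + λ z² = 0}` of `PG(2,q)`.
(The defining equation is homogeneous, so evaluating at the chosen representative
is independent of the choice.) -/
def conicSet (a b l : F) : Set (Pt F) :=
  {P | a * P.rep 0 ^ 2 + P.rep 0 * P.rep 1 + b * P.rep 1 ^ 2 + l * P.rep 2 ^ 2 = 0}

/-- The lines of `PG(2,q)`: zero sets of nonzero linear forms. -/
def IsLine (L : Set (Pt F)) : Prop :=
  ∃ u v w : F, ¬(u = 0 ∧ v = 0 ∧ w = 0) ∧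
    L = {P | u * P.rep 0 + v * P.rep 1 + w * P.rep 2 = 0}

/-- A maximal arc of degree `d`: a nonempty proper set of points met by every line
in exactly `0` or `d` points. -/
def IsMaximalArc (K : Set (Pt F)) (d : ℕ) : Prop :=
  K.Nonempty ∧ K ≠ Set.univ ∧
    ∀ L : Set (Pt F), IsLine F L → (K ∩ L).ncard = 0 ∨ (K ∩ L).ncard = d

/-- The point `(0,0,1)` of `PG(2,q)`. -/
def pt001 : Pt F := Projectivization.mk F ![0, 0, 1] (by
  intro hc
  have h2 := congrFun hc 2
  simp at h2)

/-- A collineation of `PG(2,q)`: the permutation of the point set induced by an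
invertible `σ`-semilinear map of `F³` (written as an invertible matrix composed
with a field automorphism `σ`). -/
def IsCollineation (g : Pt F → Pt F) : Prop :=
  ∃ σ : F ≃+* F, ∃ M : Matrix (Fin 3) (Fin 3) F, IsUnit M.det ∧
    ∀ (v : Fin 3 → F) (hv : v ≠ 0) (hv' : M.mulVec (fun i => σ (v i)) ≠ 0),
      g (Projectivization.mk F v hv) = Projectivization.mk F (M.mulVec (fun i => σ (v i))) hv'

/-- A closed set of conics `{F_{a(λ), b(λ), λ} : λ ∈ Λ}` in `PG(2,q)`, `q = 2^h`. -/
def IsClosedConicSet (h : ℕ) (Λ : Finset F) (a b : F → F) : Prop :=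
  (0 : F) ∉ Λ ∧ (∀ l ∈ Λ, tr F h (a l * b l) = 1) ∧
    ∀ l ∈ Λ, ∀ l' ∈ Λ, l ≠ l' →
      l + l' ∈ Λ ∧ a (l + l') = (a l * l + a l' * l') / (l + l') ∧
        b (l + l') = (b l * l + b l' * l') / (l + l')

/-- The point set of a (Mathon) arc obtained from a family of conics: the union of
the conics together with the common nucleus `(0,0,1)`. -/
def mathonSet (Λ : Finset F) (a b : F → F) : Set (Pt F) :=
  {pt001 F} ∪ ⋃ l ∈ Λ, conicSet F (a l) (b l) l

/-- The Denniston point set determined by `α` and a set `A ⊆ GF(q)`. -/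
def dennistonSet (a : F) (A : Set F) : Set (Pt F) :=
  {pt001 F} ∪ ⋃ l ∈ A \ {0}, conicSet F a 1 l

/-- A degree 4 maximal arc of Denniston type: the image under a collineation of
`{(0,0,1)} ∪ ⋃_{λ ∈ A \ {0}} F_{α,1,λ}` with `Tr(α) = 1` and `A` an additive
subgroup of order 4. -/
def IsDenniston4 (h : ℕ) (K : Set (Pt F)) : Prop :=
  ∃ a : F, tr F h a = 1 ∧ ∃ A : AddSubgroup F, Nat.card A = 4 ∧
    ∃ g : Pt F → Pt F, IsCollineation F g ∧ g '' dennistonSet F a (A : Set F) = K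

/-- `C` is a nondegenerate conic of `PG(2,q)` with nucleus `n`: the zero set of a
nonzero quadratic form, consisting of exactly `q+1` points no three of which are
collinear, all of whose tangent lines pass through `n`. -/
def IsConicWithNucleus (C : Set (Pt F)) (n : Pt F) : Prop :=
  (∃ a b c d e f : F, ¬(a = 0 ∧ b = 0 ∧ c = 0 ∧ d = 0 ∧ e = 0 ∧ f = 0) ∧
      C = {P | a * P.rep 0 ^ 2 + b * P.rep 1 ^ 2 + c * P.rep 2 ^ 2 +
        d * P.rep 0 * P.rep 1 + e * P.rep 0 * P.rep 2 + f * P.rep 1 * P.rep 2 = 0}) ∧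
    C.ncard = Fintype.card F + 1 ∧
    (∀ L : Set (Pt F), IsLine F L → (C ∩ L).ncard ≤ 2) ∧
    (∀ L : Set (Pt F), IsLine F L → (C ∩ L).ncard = 1 → n ∈ L)

/-- A maximal arc of degree `d` of Mathon type in `PG(2,q)`, `q = 2^h`. -/
def IsMathonType (h : ℕ) (K : Set (Pt F)) (d : ℕ) : Prop :=
  IsMaximalArc F K d ∧
    ∃ g : Pt F → Pt F, IsCollineation F g ∧ ∃ (Λ : Finset F) (a b : F → F),
      IsClosedConicSet F h Λ a b ∧ Λ.card + 1 = d ∧ g '' K = mathonSet F Λ a b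

/-- A maximal arc of degree `d` of Mathon type in `PG(2,q)` with nucleus `n`
(the preimage of `(0,0,1)` under a collineation realizing the Mathon description). -/
def IsMathonWithNucleus (h : ℕ) (K : Set (Pt F)) (d : ℕ) (n : Pt F) : Prop :=
  IsMaximalArc F K d ∧
    ∃ g : Pt F → Pt F, IsCollineation F g ∧ g n = pt001 F ∧
      ∃ (Λ : Finset F) (a b : F → F),
        IsClosedConicSet F h Λ a b ∧ Λ.card + 1 = d ∧ g '' K = mathonSet F Λ a b

/-- A maximal arc of Denniston type: Mathon type where the closed set of conics can
be chosen with `α` and `β` constant. -/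
def IsDennistonType (h : ℕ) (K : Set (Pt F)) : Prop :=
  ∃ g : Pt F → Pt F, IsCollineation F g ∧ ∃ (a b : F) (Λ : Finset F),
    IsClosedConicSet F h Λ (fun _ => a) (fun _ => b) ∧
    g '' K = mathonSet F Λ (fun _ => a) (fun _ => b)

/-- A proper Mathon arc of degree `d`: a Mathon arc that is not of Denniston type. -/
def IsProperMathon (h : ℕ) (K : Set (Pt F)) (d : ℕ) : Prop :=
  IsMathonType F h K d ∧ ¬ IsDennistonType F h K

end MaxArc

namespace MaxArcAux

variable {F : Type} [Field F] [Fintype F]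

lemma char_two (h : ℕ) (hcard : Fintype.card F = 2 ^ h) : CharP F 2 := by
  obtain ⟨n, hp, hn⟩ := FiniteField.card F (ringChar F)
  have hdvd : ringChar F ∣ 2 ^ h := by
    rw [← hcard, hn]; exact dvd_pow_self _ n.ne_zero
  have h2 : ringChar F = 2 :=
    (Nat.prime_dvd_prime_iff_eq hp Nat.prime_two).mp (hp.dvd_of_dvd_pow hdvd)
  exact h2 ▸ ringChar.charP F

omit [Fintype F] in
lemma tr_zero (h : ℕ) : MaxArc.tr F h 0 = 0 := by
  simp [MaxArc.tr, zero_pow (Nat.two_pow_pos _).ne']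

omit [Fintype F] in
lemma tr_add [CharP F 2] (h : ℕ) (x y : F) :
    MaxArc.tr F h (x + y) = MaxArc.tr F h x + MaxArc.tr F h y := by
  haveI : Fact (Nat.Prime 2) := ⟨Nat.prime_two⟩
  simp only [MaxArc.tr, add_pow_char_pow, Finset.sum_add_distrib]

lemma tr_sq (h : ℕ) (hcard : Fintype.card F = 2 ^ h) (x : F) :
    MaxArc.tr F h (x ^ 2) = MaxArc.tr F h x := by
  have key : ∀ i : ℕ, (x ^ 2) ^ 2 ^ i = x ^ 2 ^ (i + 1) := by
    intro i; rw [← pow_mul, pow_succ, mul_comm]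
  have h1 : MaxArc.tr F h (x ^ 2) + x ^ 2 ^ 0 =
      MaxArc.tr F h x + x ^ 2 ^ h := by
    unfold MaxArc.tr
    simp only [key]
    rw [← Finset.sum_range_succ, Finset.sum_range_succ']
  have hx : x ^ 2 ^ h = x := by rw [← hcard]; exact FiniteField.pow_card x
  rw [hx, pow_zero, pow_one] at h1
  exact add_right_cancel h1

lemma tr_artin_schreier (h : ℕ) (hcard : Fintype.card F = 2 ^ h) (s : F) :
    MaxArc.tr F h (s ^ 2 + s) = 0 := by
  haveI := char_two h hcard
  rw [tr_add, tr_sq h hcard, CharTwo.add_self_eq_zero]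

lemma disjoint_conics (h : ℕ) (hcard : Fintype.card F = 2 ^ h)
    (a b l a' b' l' : F) (hl : l ≠ 0) (hll' : l ≠ l')
    (htr : MaxArc.tr F h
      ((a * l' + a' * l) / (l + l') * ((b * l' + b' * l) / (l + l'))) = 1) :
    Disjoint (MaxArc.conicSet F a b l) (MaxArc.conicSet F a' b' l') := by
  haveI := char_two h hcard
  have htwo : (2 : F) = 0 := by exact_mod_cast CharP.cast_eq_zero F 2
  rw [Set.disjoint_left]
  intro P h1 h2
  simp only [MaxArc.conicSet, Set.mem_setOf_eq] at h1 h2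
  set x := P.rep 0 with hxdef
  set y := P.rep 1 with hydef
  set z := P.rep 2 with hzdef
  have hd : l + l' ≠ 0 := by
    intro hc
    exact hll' (by linear_combination hc - l' * htwo)
  have key : (a * l' + a' * l) * x ^ 2 + (l + l') * (x * y)
      + (b * l' + b' * l) * y ^ 2 = 0 := by
    linear_combination l' * h1 + l * h2 - l * l' * z ^ 2 * htwo
  set A := (a * l' + a' * l) / (l + l') with hA
  set B := (b * l' + b' * l) / (l + l') with hB
  have key2 : A * x ^ 2 + x * y + B * y ^ 2 = 0 := by
    have e : (l + l') * (A * x ^ 2 + x * y + B * y ^ 2)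
        = (a * l' + a' * l) * x ^ 2 + (l + l') * (x * y) + (b * l' + b' * l) * y ^ 2 := by
      rw [hA, hB]; field_simp
    rcases mul_eq_zero.mp (e.trans key) with hc | hc
    · exact absurd hc hd
    · exact hc
  by_cases hy : y = 0
  · by_cases hx : x = 0
    · have hz : z = 0 := by
        have hlz : l * z ^ 2 = 0 := by rw [hx, hy] at h1; linear_combination h1
        rcases mul_eq_zero.mp hlz with hc | hc
        · exact absurd hc hl
        · exact pow_eq_zero_iff (by norm_num) |>.mp hc
      exact P.rep_nonzero (funext fun i => by fin_cases i <;> assumption)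
    · have hA0 : A = 0 := by
        have hax : A * x ^ 2 = 0 := by rw [hy] at key2; linear_combination key2
        rcases mul_eq_zero.mp hax with hc | hc
        · exact hc
        · exact absurd (pow_eq_zero_iff (by norm_num) |>.mp hc) hx
      rw [hA0, zero_mul, tr_zero] at htr
      exact zero_ne_one htr
  · have e0 : A * x / y * y = A * x := div_mul_cancel₀ _ hy
    have e1 : ((A * x / y) ^ 2 + A * x / y) * y ^ 2 = A ^ 2 * x ^ 2 + A * x * y := by
      calc ((A * x / y) ^ 2 + A * x / y) * y ^ 2
          = (A * x / y * y) ^ 2 + (A * x / y * y) * y := by ring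
        _ = A ^ 2 * x ^ 2 + A * x * y := by rw [e0]; ring
    have hAS : (A * x / y) ^ 2 + A * x / y = A * B := by
      refine mul_right_cancel₀ (pow_ne_zero 2 hy) ?_
      rw [e1]
      linear_combination A * key2 - A * B * y ^ 2 * htwo
    have h0 := tr_artin_schreier h hcard (A * x / y)
    rw [hAS, htr] at h0
    exact one_ne_zero h0

end MaxArcAux


/-- Mathon's disjointness lemma: under the trace conditions, the two
conics and their composition are pairwise disjoint. -/
theorem statement0 {F : Type} [Field F] [Fintype F] (h : ℕ)
    (hcard : Fintype.card F = 2 ^ h)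
    (α β l α' β' l' : F) (hl : l ≠ 0) (hl' : l' ≠ 0) (hll' : l ≠ l')
    (htr : MaxArc.tr F h (α * β) = 1) (htr' : MaxArc.tr F h (α' * β') = 1)
    (htr'' : MaxArc.tr F h
      (((α * l + α' * l') / (l + l')) * ((β * l + β' * l') / (l + l'))) = 1) :
    Disjoint (MaxArc.conicSet F α β l) (MaxArc.conicSet F α' β' l') ∧
    Disjoint (MaxArc.conicSet F α β l)
      (MaxArc.conicSet F ((α * l + α' * l') / (l + l')) ((β * l + β' * l') / (l + l')) (l + l')) ∧
    Disjoint (MaxArc.conicSet F α' β' l')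
      (MaxArc.conicSet F ((α * l + α' * l') / (l + l')) ((β * l + β' * l') / (l + l')) (l + l')) := by
  
  haveI := MaxArcAux.char_two h hcard
  have htwo : (2 : F) = 0 := by exact_mod_cast CharP.cast_eq_zero F 2
  have hd : l + l' ≠ 0 := fun hc => hll' (by linear_combination hc - l' * htwo)
  have hd1 : l + (l + l') ≠ 0 := fun hc => hl' (by linear_combination hc - l * htwo)
  have hd2 : l' + (l + l') ≠ 0 := fun hc => hl (by linear_combination hc - l' * htwo)
  have h13 : l ≠ l + l' := fun hc => hl' (by linear_combination -hc)
  have h23 : l' ≠ l + l' := fun hc => hl (by linear_combination -hc)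
  have hsum : MaxArc.tr F h (α * β + α' * β' +
      (α * l + α' * l') / (l + l') * ((β * l + β' * l') / (l + l'))) = 1 := by
    rw [MaxArcAux.tr_add, MaxArcAux.tr_add, htr, htr', htr'']
    linear_combination htwo
  refine ⟨?_, ?_, ?_⟩
  · apply MaxArcAux.disjoint_conics h hcard _ _ _ _ _ _ hl hll'
    have hid : (α * l' + α' * l) / (l + l') * ((β * l' + β' * l) / (l + l'))
        = α * β + α' * β' + (α * l + α' * l') / (l + l') * ((β * l + β' * l') / (l + l')) := by
      field_simp
      linear_combination (-l * l' * α * β - l * l' * α' * β' - l ^ 2 * α * β - l' ^ 2 * α' * β') * htwo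
    rw [hid]; exact hsum
  · apply MaxArcAux.disjoint_conics h hcard _ _ _ _ _ _ hl h13
    have hid : (α * (l + l') + (α * l + α' * l') / (l + l') * l) / (l + (l + l'))
        * ((β * (l + l') + (β * l + β' * l') / (l + l') * l) / (l + (l + l')))
        = α * β + α' * β' + (α * l + α' * l') / (l + l') * ((β * l + β' * l') / (l + l')) := by
      field_simp
      linear_combination ((-l * l' ^ 5 * α * β - 7 * l * l' ^ 5 * α' * β' - 5 * l ^ 2 * l' ^ 4 * α * β - l ^ 2 * l' ^ 4 * α * β' - l ^ 2 * l' ^ 4 * α' * β - 19 * l ^ 2 * l' ^ 4 * α' * β' - 11 * l ^ 3 * l' ^ 3 * α * β - 3 * l ^ 3 * l' ^ 3 * α * β' - 3 * l ^ 3 * l' ^ 3 * α' * β - 27 * l ^ 3 * l' ^ 3 * α' * β' - 13 * l ^ 4 * l' ^ 2 * α * β - 3 * l ^ 4 * l' ^ 2 * α * β' - 3 * l ^ 4 * l' ^ 2 * α' * β - 22 * l ^ 4 * l' ^ 2 * α' * β' - 8 * l ^ 5 * l' * α * β - l ^ 5 * l' * α * β' - l ^ 5 * l' * α' * β - 10 *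 l ^ 5 * l' * α' * β' - 2 * l ^ 6 * α * β - 2 * l ^ 6 * α' * β' - l' ^ 6 * α' * β') + (-(α * l * l' ^ 3 * β * 1) + α * l * l' ^ 5 * β * 1 - α * l ^ 2 * l' ^ 2 * β * 3 - α * l ^ 2 * l' ^ 2 * β' * 1 + α * l ^ 2 * l' ^ 4 * β * 5 + α * l ^ 2 * l' ^ 4 * β' * 1 - α * l ^ 3 * l' * β * 4 - α * l ^ 3 * l' * β' * 1 + α * l ^ 3 * l' ^ 3 * β * 11 + α * l ^ 3 * l' ^ 3 * β' * 3 + α * l ^ 4 * l' ^ 2 * β * 13 + α * l ^ 4 * l' ^ 2 * β' * 3 - α * l ^ 4 * β * 2 + α * l ^ 5 * l' * β * 8 + α * l ^ 5 * l' * β' * 1 + α * l ^ 6 * β * 2 - l * l' ^ 3 * α' * β' * 5 + l * l' ^ 5 * α' * β' * 7 - l ^ 2 * l' ^ 2 * α' * β * 1 - l ^ 2 * l' ^ 2 * α' * β' * 8 + l ^ 2 * l' ^ 4 * α' * β * 1 + l ^ 2 * l' ^ 4 * α' * β' * 19 - l ^ 3 * l' * α' * β * 1 - l ^ 3 * l'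 * α' * β' * 6 + l ^ 3 * l' ^ 3 * α' * β * 3 + l ^ 3 * l' ^ 3 * α' * β' * 27 + l ^ 4 * l' ^ 2 * α' * β * 3 + l ^ 4 * l' ^ 2 * α' * β' * 22 - l ^ 4 * α' * β' * 2 + l ^ 5 * l' * α' * β * 1 + l ^ 5 * l' * α' * β' * 10 + l ^ 6 * α' * β' * 2 - l' ^ 4 * α' * β' * 1 + l' ^ 6 * α' * β' * 1)) * htwo
    rw [hid]; exact hsum
  · apply MaxArcAux.disjoint_conics h hcard _ _ _ _ _ _ hl' h23
    have hid : (α' * (l + l') + (α * l + α' * l') / (l + l') * l') / (l' + (l + l'))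
        * ((β' * (l + l') + (β * l + β' * l') / (l + l') * l') / (l' + (l + l')))
        = α * β + α' * β' + (α * l + α' * l') / (l + l') * ((β * l + β' * l') / (l + l')) := by
      field_simp
      linear_combination ((-10 * l * l' ^ 5 * α * β - l * l' ^ 5 * α * β' - l * l' ^ 5 * α' * β - 8 * l * l' ^ 5 * α' * β' - 22 * l ^ 2 * l' ^ 4 * α * β - 3 * l ^ 2 * l' ^ 4 * α * β' - 3 * l ^ 2 * l' ^ 4 * α' * β - 13 * l ^ 2 * l' ^ 4 * α' * β' - 27 * l ^ 3 * l' ^ 3 * α * β - 3 * l ^ 3 * l' ^ 3 * α * β' - 3 * l ^ 3 * l' ^ 3 * α' * β - 11 * l ^ 3 * l' ^ 3 * α' * β' - 19 * l ^ 4 * l' ^ 2 * α * β - l ^ 4 * l' ^ 2 * α * β' - l ^ 4 * l' ^ 2 * α' * β - 5 * l ^ 4 * l' ^ 2 * α' * β' - 7 * l ^ 5 * l' * α * β - l ^ 5 * l' * α' * β' - l ^ 6 * α * β - 2 * l' ^ 6 * α * β - 2 * l' ^ 6 * α' * β') + (-(α' * l * l' ^ 3 * β' * 4) - α' * l * l'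 ^ 3 * β * 1 + α' * l * l' ^ 5 * β' * 8 + α' * l * l' ^ 5 * β * 1 - α' * l ^ 2 * l' ^ 2 * β' * 3 - α' * l ^ 2 * l' ^ 2 * β * 1 + α' * l ^ 2 * l' ^ 4 * β' * 13 + α' * l ^ 2 * l' ^ 4 * β * 3 - α' * l ^ 3 * l' * β' * 1 + α' * l ^ 3 * l' ^ 3 * β' * 11 + α' * l ^ 3 * l' ^ 3 * β * 3 + α' * l ^ 4 * l' ^ 2 * β' * 5 + α' * l ^ 4 * l' ^ 2 * β * 1 + α' * l ^ 5 * l' * β' * 1 - α' * l' ^ 4 * β' * 2 + α' * l' ^ 6 * β' * 2 - l * l' ^ 3 * α * β' * 1 - l * l' ^ 3 * α * β * 6 + l * l' ^ 5 * α * β' * 1 + l * l' ^ 5 * α * β * 10 - l ^ 2 * l' ^ 2 * α * β' * 1 - l ^ 2 * l' ^ 2 * α * β * 8 + l ^ 2 * l' ^ 4 * α * β' * 3 + l ^ 2 * l' ^ 4 * α * β * 22 - l ^ 3 * l' * α * β * 5 + l ^ 3 * l' ^ 3 * α * β' * 3 + l ^ 3 * l' ^ 3 * α * β * 27 + l ^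 4 * l' ^ 2 * α * β' * 1 + l ^ 4 * l' ^ 2 * α * β * 19 - l ^ 4 * α * β * 1 + l ^ 5 * l' * α * β * 7 + l ^ 6 * α * β * 1 - l' ^ 4 * α * β * 2 + l' ^ 6 * α * β * 2)) * htwo
    rw [hid]; exact hsum
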